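/- For natural numbers m₁, m₂, the double sum H₃(m₁,m₂) = Σ_{p₁=m₂}^{m₁+m₂} Σ_{p₂=0}^{m₂} C₃(p₁,p₂) equals: 1 if m₁ ≡ 0 and m₂ ≡ 0 mod 3; -1 if m₁ ≡ 1 and m₂ ≡ 1 mod 3; and 0 in all other cases. -/

import Mathlib

/-- `C₃(p₁,p₂)`: the 3-periodic function of `p₁ - p₂` taking values
`1, -1, 0` for `p₁ - p₂ ≡ 0, 1, 2 mod 3`. -/
def C3 (p₁ p₂ : ℕ) : ℤ := ![1, -1, 0] ⟨(p₁ - p₂) % 3, by omega⟩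

private lemma C3_eq (a b : ℕ) : C3 a b = ![1, -1, 0] ⟨(a - b) % 3, Nat.mod_lt _ (by norm_num)⟩ := rfl

private lemma C3_cycle1 (a b : ℕ) (h : b ≤ a) :
    C3 a b + C3 (a + 1) b + C3 (a + 2) b = 0 := by
  have h1 : a + 1 - b = (a - b) + 1 := by omega
  have h2 : a + 2 - b = (a - b) + 2 := by omega
  rw [C3_eq, C3_eq, C3_eq, h1, h2]
  set d := a - b with hd
  have : d % 3 = 0 ∨ d % 3 = 1 ∨ d % 3 = 2 := by omega
  rcases this with h | h | h <;>
    · have e1 : (d + 1) % 3 = (d % 3 + 1) % 3 := by omega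
      have e2 : (d + 2) % 3 = (d % 3 + 2) % 3 := by omega
      simp [e1, e2, h]

private lemma C3_cycle2 (a : ℕ) (h : 2 ≤ a) :
    C3 a 0 + C3 a 1 + C3 a 2 = 0 := by
  have h1 : a - 0 = (a - 2) + 2 := by omega
  have h2 : a - 1 = (a - 2) + 1 := by omega
  rw [C3_eq, C3_eq, C3_eq, h1, h2]
  set d := a - 2 with hd
  have : d % 3 = 0 ∨ d % 3 = 1 ∨ d % 3 = 2 := by omega
  rcases this with h | h | h <;>
    · have e1 : (d + 1) % 3 = (d % 3 + 1) % 3 := by omega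
      have e2 : (d + 2) % 3 = (d % 3 + 2) % 3 := by omega
      simp [e1, e2, h]

private lemma C3_shift (a b : ℕ) : C3 (3 + a) (3 + b) = C3 a b := by
  rw [C3_eq, C3_eq, Nat.add_sub_add_left]

private def S (m₁ m₂ : ℕ) : ℤ :=
  ∑ p₁ ∈ Finset.Icc m₂ (m₁ + m₂), ∑ p₂ ∈ Finset.Icc 0 m₂, C3 p₁ p₂

private lemma S_per1 (m₁ m₂ : ℕ) : S (m₁ + 3) m₂ = S m₁ m₂ := by
  unfold S
  have e : m₁ + 3 + m₂ = (m₁ + m₂ + 1 + 1) + 1 := by omega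
  rw [e, Finset.sum_Icc_succ_top (by omega), Finset.sum_Icc_succ_top (by omega),
    Finset.sum_Icc_succ_top (by omega)]
  have : (∑ p₂ ∈ Finset.Icc 0 m₂, C3 (m₁ + m₂ + 1) p₂)
      + (∑ p₂ ∈ Finset.Icc 0 m₂, C3 (m₁ + m₂ + 1 + 1) p₂)
      + (∑ p₂ ∈ Finset.Icc 0 m₂, C3 (m₁ + m₂ + 1 + 1 + 1) p₂) = 0 := by
    rw [← Finset.sum_add_distrib, ← Finset.sum_add_distrib]
    apply Finset.sum_eq_zero
    intro x hx
    simp only [Finset.mem_Icc] at hx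
    have := C3_cycle1 (m₁ + m₂ + 1) x (by omega)
    convert this using 3
  linarith [this]

private lemma S_per2 (m₁ m₂ : ℕ) : S m₁ (m₂ + 3) = S m₁ m₂ := by
  unfold S
  have e : Finset.Icc (m₂ + 3) (m₁ + (m₂ + 3))
      = (Finset.Icc m₂ (m₁ + m₂)).map (addLeftEmbedding 3) := by
    rw [Finset.map_add_left_Icc]; congr 1 <;> omega
  rw [e, Finset.sum_map]
  simp only [addLeftEmbedding_apply]
  apply Finset.sum_congr rfl
  intro p₁ hp₁
  simp only [Finset.mem_Icc] at hp₁
  have er : ∀ n : ℕ, Finset.Icc 0 n = Finset.range (n + 1) := by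
    intro n; rw [← Finset.Ico_add_one_right_eq_Icc, Finset.range_eq_Ico]
  rw [er, er, show m₂ + 3 + 1 = 3 + (m₂ + 1) by omega, Finset.sum_range_add]
  have h3 : (∑ i ∈ Finset.range 3, C3 (3 + p₁) i) = 0 := by
    rw [Finset.sum_range_succ, Finset.sum_range_succ, Finset.sum_range_one]
    exact C3_cycle2 (3 + p₁) (by omega)
  rw [h3, zero_add]
  exact Finset.sum_congr rfl fun i _ => C3_shift p₁ i

private lemma S_mod (m₁ m₂ : ℕ) : S m₁ m₂ = S (m₁ % 3) (m₂ % 3) := by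
  have h1 : ∀ m₁ m₂ : ℕ, S m₁ m₂ = S (m₁ % 3) m₂ := by
    intro m₁
    induction m₁ using Nat.strong_induction_on with
    | _ m₁ ih =>
      intro m₂
      rcases Nat.lt_or_ge m₁ 3 with h | h
      · rw [Nat.mod_eq_of_lt h]
      · obtain ⟨k, rfl⟩ : ∃ k, m₁ = k + 3 := ⟨m₁ - 3, by omega⟩
        rw [S_per1, ih k (by omega), Nat.add_mod_right]
  have h2 : ∀ m₂ m₁ : ℕ, S m₁ m₂ = S m₁ (m₂ % 3) := by
    intro m₂
    induction m₂ using Nat.strong_induction_on with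
    | _ m₂ ih =>
      intro m₁
      rcases Nat.lt_or_ge m₂ 3 with h | h
      · rw [Nat.mod_eq_of_lt h]
      · obtain ⟨k, rfl⟩ : ∃ k, m₂ = k + 3 := ⟨m₂ - 3, by omega⟩
        rw [S_per2, ih k (by omega), Nat.add_mod_right]
  rw [h1, h2]

/-- `H₃(m₁,m₂) = Σ_{p₁=m₂}^{m₁+m₂} Σ_{p₂=0}^{m₂} C₃(p₁,p₂)` equals
`1` if `m₁ ≡ 0` and `m₂ ≡ 0 mod 3`, `-1` if `m₁ ≡ 1` and `m₂ ≡ 1 mod 3`, and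
`0` in all other cases. -/
theorem stmt14 (m₁ m₂ : ℕ) :
    (m₁ % 3 = 0 → m₂ % 3 = 0 →
      (∑ p₁ ∈ Finset.Icc m₂ (m₁ + m₂), ∑ p₂ ∈ Finset.Icc 0 m₂, C3 p₁ p₂) = 1) ∧
    (m₁ % 3 = 1 → m₂ % 3 = 1 →
      (∑ p₁ ∈ Finset.Icc m₂ (m₁ + m₂), ∑ p₂ ∈ Finset.Icc 0 m₂, C3 p₁ p₂) = -1) ∧
    (¬(m₁ % 3 = 0 ∧ m₂ % 3 = 0) → ¬(m₁ % 3 = 1 ∧ m₂ % 3 = 1) →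
      (∑ p₁ ∈ Finset.Icc m₂ (m₁ + m₂), ∑ p₂ ∈ Finset.Icc 0 m₂, C3 p₁ p₂) = 0) := by
  have key : S m₁ m₂ = S (m₁ % 3) (m₂ % 3) := S_mod m₁ m₂
  have h1 : m₁ % 3 = 0 ∨ m₁ % 3 = 1 ∨ m₁ % 3 = 2 := by omega
  have h2 : m₂ % 3 = 0 ∨ m₂ % 3 = 1 ∨ m₂ % 3 = 2 := by omega
  refine ⟨?_, ?_, ?_⟩ <;> intro ha hb <;> show S m₁ m₂ = _
  · rw [key, ha, hb]; decide
  · rw [key, ha, hb]; decide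
  · rw [key]
    rcases h1 with h | h | h <;> rcases h2 with h' | h' | h' <;> rw [h, h'] <;>
      first
      | decide
      | (exact absurd (And.intro h h') ha)
      | (exact absurd (And.intro h h') hb)
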